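/- For every graph G, the tracial rank satisfies ξ_tr(G) ≤ ξ_f(G) ≤ χ_f(G), where ξ_f is the projective rank and χ_f the fractional chromatic number. In particular, any d/r-projective representation of G (projections E_v of rank r on ℂ^d with E_v E_w = 0 for v ∼ w) together with the normalized trace on M_d gives a witness for ξ_tr(G) ≤ d/r. -/

import Mathlib

noncomputable section
open scoped ComplexOrder

/-- A witness for the tracial rank: a unital C*-algebra with a tracial state `s` and
projections `e_v` with `e_v e_w = 0` for adjacent `v, w` and `s(e_v) = u` for all `v`. -/
structure TracialWitness {V : Type*} (G : SimpleGraph V) (u : ℝ) where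
  A : Type
  [nring : NormedRing A]
  [sring : StarRing A]
  [cstar : CStarRing A]
  [nalg : NormedAlgebra ℂ A]
  [cs : CompleteSpace A]
  [smod : StarModule ℂ A]
  s : A →ₗ[ℂ] ℂ
  unital : s 1 = 1
  pos : ∀ a : A, 0 ≤ s (star a * a)
  tracial : ∀ x y : A, s (x * y) = s (y * x)
  e : V → A
  proj : ∀ v, star (e v) = e v ∧ e v * e v = e v
  orth : ∀ v w, G.Adj v w → e v * e w = 0
  val : ∀ v, s (e v) = (u : ℂ)

/-- The tracial rank `ξ_tr(G)`: the reciprocal of the supremum of the feasible values `u`. -/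
def tracialRank {V : Type*} (G : SimpleGraph V) : ℝ :=
  (sSup {u : ℝ | Nonempty (TracialWitness G u)})⁻¹

/-- The projective rank `ξ_f(G)`: the infimum of `d / r` over all `d/r`-projective
representations of `G` (rank-`r` projections `E_v` on `ℂ^d` with `E_v E_w = 0` on edges). -/
def projRank {V : Type*} (G : SimpleGraph V) : ℝ :=
  sInf {x : ℝ | ∃ d r : ℕ, 0 < r ∧ x = (d : ℝ) / r ∧
    ∃ E : V → Matrix (Fin d) (Fin d) ℂ,
      (∀ v, (E v).IsHermitian ∧ E v * E v = E v ∧ (E v).rank = r) ∧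
      ∀ v w, G.Adj v w → E v * E w = 0}

/-- The fractional chromatic number of a graph. -/
def fracChromNum {V : Type*} (G : SimpleGraph V) : ℝ :=
  sInf {x : ℝ | ∃ a b : ℕ, 0 < b ∧ x = (a : ℝ) / b ∧
    ∃ f : V → Finset (Fin a), (∀ v, (f v).card = b) ∧
      ∀ v w, G.Adj v w → Disjoint (f v) (f w)}

open scoped Matrix.Norms.L2Operator

/-- Trace of an idempotent complex matrix equals its rank. -/
lemma aux_trace_idem {d : ℕ} (E : Matrix (Fin d) (Fin d) ℂ) (h : E * E = E) :
    E.trace = (E.rank : ℂ) := by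
  have hf : E.mulVecLin ∘ₗ E.mulVecLin = E.mulVecLin := by
    rw [← Matrix.mulVecLin_mul, h]
  obtain ⟨p, hp⟩ := (LinearMap.isProj_iff_isIdempotentElem _).mpr hf
  have hrange : LinearMap.range E.mulVecLin = p := by
    apply le_antisymm
    · rintro x ⟨y, rfl⟩; exact hp.map_mem y
    · intro x hx; exact ⟨x, hp.map_id x hx⟩
  have htr := hp.trace
  have h2 : Matrix.trace E = LinearMap.trace ℂ (Fin d → ℂ) E.mulVecLin := by
    rw [LinearMap.trace_eq_matrix_trace ℂ (Pi.basisFun ℂ (Fin d)), LinearMap.toMatrix_eq_toMatrix',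
      ← Matrix.toLin'_apply', LinearMap.toMatrix'_toLin']
  rw [h2, htr, Matrix.rank, hrange]

/-- A projective representation yields a tracial witness via the normalized trace. -/
lemma aux_witness {V : Type*} [Nonempty V] (G : SimpleGraph V) (d r : ℕ) (hr : 0 < r)
    (E : V → Matrix (Fin d) (Fin d) ℂ)
    (hE : ∀ v, (E v).IsHermitian ∧ E v * E v = E v ∧ (E v).rank = r)
    (horth : ∀ v w, G.Adj v w → E v * E w = 0) :
    Nonempty (TracialWitness G ((r : ℝ) / d)) := by
  have hd : 0 < d := by
    have h1 := (hE (Classical.arbitrary V)).2.2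
    have h2 := (E (Classical.arbitrary V)).rank_le_card_width
    simp only [Fintype.card_fin] at h2
    omega
  have hdC : (d : ℂ) ≠ 0 := Nat.cast_ne_zero.mpr hd.ne'
  refine ⟨{ A := Matrix (Fin d) (Fin d) ℂ
            s := (d : ℂ)⁻¹ • Matrix.traceLinearMap (Fin d) ℂ ℂ
            unital := ?_
            pos := ?_
            tracial := ?_
            e := E
            proj := fun v => ⟨(hE v).1, (hE v).2.1⟩
            orth := horth
            val := ?_ }⟩
  · simp [Matrix.trace_one, inv_mul_cancel₀ hdC]
  · intro a
    have h1 : (star a * a).trace = ∑ i, ∑ j, star (a j i) * a j i := by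
      simp [Matrix.trace, Matrix.mul_apply, Matrix.diag, Matrix.conjTranspose_apply,
        Matrix.star_apply]
    have h2 : (0 : ℂ) ≤ (d : ℂ)⁻¹ := by
      rw [show ((d : ℂ))⁻¹ = (((d : ℝ)⁻¹ : ℝ) : ℂ) by push_cast; ring]
      exact Complex.zero_le_real.mpr (by positivity)
    simp only [LinearMap.smul_apply, Matrix.traceLinearMap_apply, smul_eq_mul]
    refine mul_nonneg h2 ?_
    rw [h1]
    exact Finset.sum_nonneg fun i _ => Finset.sum_nonneg fun j _ => star_mul_self_nonneg _
  · intro x y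
    simp [Matrix.trace_mul_comm x y]
  · intro v
    have h1 : (E v).trace = (r : ℂ) := by
      rw [aux_trace_idem (E v) (hE v).2.1, (hE v).2.2]
    simp only [LinearMap.smul_apply, Matrix.traceLinearMap_apply, smul_eq_mul, h1]
    push_cast
    rw [inv_mul_eq_div]

theorem stmt14 {V : Type*} [Fintype V] [Nonempty V] (G : SimpleGraph V) :
    tracialRank G ≤ projRank G ∧ projRank G ≤ fracChromNum G ∧
    ∀ (d r : ℕ), 0 < r → ∀ E : V → Matrix (Fin d) (Fin d) ℂ,
      (∀ v, (E v).IsHermitian ∧ E v * E v = E v ∧ (E v).rank = r) →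
      (∀ v w, G.Adj v w → E v * E w = 0) →
      Nonempty (TracialWitness G ((r : ℝ) / d)) := by
  classical
  set S1 := {x : ℝ | ∃ d r : ℕ, 0 < r ∧ x = (d : ℝ) / r ∧
    ∃ E : V → Matrix (Fin d) (Fin d) ℂ,
      (∀ v, (E v).IsHermitian ∧ E v * E v = E v ∧ (E v).rank = r) ∧
      ∀ v w, G.Adj v w → E v * E w = 0} with hS1
  set S2 := {x : ℝ | ∃ a b : ℕ, 0 < b ∧ x = (a : ℝ) / b ∧
    ∃ f : V → Finset (Fin a), (∀ v, (f v).card = b) ∧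
      ∀ v w, G.Adj v w → Disjoint (f v) (f w)} with hS2
  -- S2 ⊆ S1 : turn a fractional coloring into diagonal projections
  have hsub : S2 ⊆ S1 := by
    rintro x ⟨a, b, hb, rfl, f, hcard, hdisj⟩
    refine ⟨a, b, hb, rfl, fun v => Matrix.diagonal (fun i => if i ∈ f v then (1 : ℂ) else 0),
      fun v => ⟨?_, ?_, ?_⟩, ?_⟩
    · rw [Matrix.isHermitian_diagonal_iff]
      intro i
      by_cases h : i ∈ f v <;> simp [h]
    · rw [Matrix.diagonal_mul_diagonal]
      have heq : (fun i => (if i ∈ f v then (1 : ℂ) else 0) * (if i ∈ f v then (1 : ℂ) else 0))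
          = fun i => if i ∈ f v then (1 : ℂ) else 0 := by
        funext i; by_cases h : i ∈ f v <;> simp [h]
      rw [heq]
    · rw [Matrix.rank_diagonal]
      have he : ∀ i, ((if i ∈ f v then (1 : ℂ) else 0) ≠ 0) ↔ i ∈ f v := by
        intro i; by_cases h : i ∈ f v <;> simp [h]
      rw [Fintype.card_congr (Equiv.subtypeEquivRight he), Fintype.card_coe, hcard v]
    · intro v w hvw
      have hd := Finset.disjoint_left.mp (hdisj v w hvw)
      rw [Matrix.diagonal_mul_diagonal]
      ext i j
      by_cases h : i ∈ f v
      · simp [Matrix.diagonal_apply, h, hd h]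
      · simp [Matrix.diagonal_apply, h]
  -- S2 is nonempty (trivial coloring)
  have hne2 : S2.Nonempty := by
    refine ⟨(Fintype.card V : ℝ), Fintype.card V, 1, one_pos, by simp, fun v => {Fintype.equivFin V v},
      fun v => Finset.card_singleton _, ?_⟩
    intro v w hvw
    rw [Finset.disjoint_singleton]
    exact fun h => hvw.ne ((Fintype.equivFin V).injective h)
  have hne1 : S1.Nonempty := hne2.mono hsub
  -- S1 is bounded below by 0
  have hbdd1 : BddBelow S1 := by
    refine ⟨0, ?_⟩
    rintro x ⟨d, r, hr, rfl, -⟩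
    positivity
  -- the feasible set for the tracial rank is bounded above by 1
  have hbddU : BddAbove {u : ℝ | Nonempty (TracialWitness G u)} := by
    refine ⟨1, ?_⟩
    rintro u ⟨W⟩
    letI := W.nring; letI := W.sring; letI := W.cstar; letI := W.nalg
    letI := W.cs; letI := W.smod
    obtain ⟨hstar, hidem⟩ := W.proj (Classical.arbitrary V)
    have h1 : star ((1 : W.A) - W.e (Classical.arbitrary V)) * ((1 : W.A) - W.e (Classical.arbitrary V))
        = 1 - W.e (Classical.arbitrary V) := by
      rw [star_sub, star_one, hstar, sub_mul, one_mul, mul_sub, mul_one, hidem]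
      abel
    have h2 := W.pos ((1 : W.A) - W.e (Classical.arbitrary V))
    rw [h1, map_sub, W.unital, W.val (Classical.arbitrary V)] at h2
    have h3 : (u : ℂ) ≤ 1 := by
      have := sub_nonneg.mp h2
      exact this
    exact_mod_cast h3
  refine ⟨?_, csInf_le_csInf hbdd1 hne2 hsub, fun d r hr E hE horth => aux_witness G d r hr E hE horth⟩
  -- tracialRank ≤ projRank
  refine le_csInf hne1 ?_
  rintro x ⟨d, r, hr, rfl, E, hE, horth⟩
  have hd : 0 < d := by
    have h1 := (hE (Classical.arbitrary V)).2.2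
    have h2 := (E (Classical.arbitrary V)).rank_le_card_width
    simp only [Fintype.card_fin] at h2
    omega
  have hmem : (r : ℝ) / d ∈ {u : ℝ | Nonempty (TracialWitness G u)} :=
    aux_witness G d r hr E hE horth
  have hle : (r : ℝ) / d ≤ sSup {u : ℝ | Nonempty (TracialWitness G u)} := le_csSup hbddU hmem
  have hpos : 0 < (r : ℝ) / d := by positivity
  calc tracialRank G = (sSup {u : ℝ | Nonempty (TracialWitness G u)})⁻¹ := rfl
    _ ≤ ((r : ℝ) / d)⁻¹ := by gcongr
    _ = (d : ℝ) / r := by rw [inv_div]
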